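/- Let x ∈ ℝ^m and X ∈ S^m be such that the (m+1)×(m+1) block matrix [[1, x^T],[x, X]] is positive semidefinite, diag(X) = x, tr(X) = n, and ⟨J_m, X⟩ = n². If ⟨u_i u_i^T, X⟩ = ⟨v_i v_i^T, X⟩ = 1 for all i ∈ N, then u_i^T x = 1 and v_i^T x = 1 for all i ∈ N. -/

import Mathlib

open Matrix

noncomputable section

/-- Trace inner product `⟨M, N⟩ = tr(Mᵀ N)` on real matrices. -/
def tip {k l : ℕ} (M N : Matrix (Fin k) (Fin l) ℝ) : ℝ := (Mᵀ * N).trace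

/-- The extended matrix `[[1, xᵀ], [x, X]]`, with the top row/column indexed by `0`. -/
def extM {m : ℕ} (x : Fin m → ℝ) (X : Matrix (Fin m) (Fin m) ℝ) :
    Matrix (Fin (m + 1)) (Fin (m + 1)) ℝ :=
  Matrix.of (Fin.cons (Fin.cons 1 x) (fun i => Fin.cons (x i) (fun j => X i j)))

lemma quad_form_aux {m : ℕ} (x w : Fin m → ℝ) (X : Matrix (Fin m) (Fin m) ℝ) (c : ℝ) :
    (Fin.cons c w : Fin (m+1) → ℝ) ⬝ᵥ (extM x X *ᵥ Fin.cons c w) =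
      c ^ 2 + c * (x ⬝ᵥ w) + c * (w ⬝ᵥ x) + w ⬝ᵥ (X *ᵥ w) := by
  simp only [dotProduct, mulVec, extM, Matrix.of_apply, Fin.sum_univ_succ, Fin.cons_zero,
    Fin.cons_succ, mul_one, mul_add, add_mul, Finset.mul_sum, Finset.sum_mul,
    Finset.sum_add_distrib]
  ring_nf

lemma tip_vecMulVec {m : ℕ} (w : Fin m → ℝ) (X : Matrix (Fin m) (Fin m) ℝ) :
    tip (vecMulVec w w) X = w ⬝ᵥ (X *ᵥ w) := by
  simp only [tip, Matrix.trace, Matrix.diag, Matrix.mul_apply, Matrix.transpose_apply,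
    vecMulVec_apply, dotProduct, mulVec, Finset.mul_sum]
  rw [Finset.sum_comm]
  exact Finset.sum_congr rfl fun e _ => Finset.sum_congr rfl fun f _ => by ring

lemma sq_le_one_of_psd {m : ℕ} (x : Fin m → ℝ) (X : Matrix (Fin m) (Fin m) ℝ)
    (hpsd : (extM x X).PosSemidef) (w : Fin m → ℝ) (hq : w ⬝ᵥ (X *ᵥ w) = 1) :
    w ⬝ᵥ x ≤ 1 := by
  set a := w ⬝ᵥ x with ha
  have h0 := hpsd.dotProduct_mulVec_nonneg (Fin.cons (-a) w)
  rw [star_trivial, quad_form_aux] at h0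
  have hxw : x ⬝ᵥ w = a := dotProduct_comm x w
  rw [hxw, hq] at h0
  nlinarith [h0]

/-- if the extended matrix `[[1,xᵀ],[x,X]]` is PSD, `diag(X) = x`,
`tr(X) = n`, `⟨J, X⟩ = n²` and the Type I squared linear constraints hold, then the
linear constraints `uᵢᵀ x = 1` and `vᵢᵀ x = 1` hold for all `i ∈ N`. -/
theorem linear_constraints_redundant
    (n m : ℕ) (src tgt : Fin m → Fin n)
    (h_simple : ∀ e f : Fin m, src e = src f → tgt e = tgt f → e = f)
    (h_noloop : ∀ e : Fin m, src e ≠ tgt e)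
    (u v : Fin n → Fin m → ℝ)
    (hu : ∀ i e, u i e = if src e = i then 1 else 0)
    (hv : ∀ i e, v i e = if tgt e = i then 1 else 0)
    (x : Fin m → ℝ) (X : Matrix (Fin m) (Fin m) ℝ)
    (hXsymm : X.IsSymm)
    (hpsd : (extM x X).PosSemidef)
    (hdiag : X.diag = x)
    (htrace : X.trace = (n : ℝ))
    (hallones : tip (Matrix.of fun _ _ => (1 : ℝ)) X = (n : ℝ) ^ 2)
    (hTypeI : ∀ i, tip (vecMulVec (u i) (u i)) X = 1 ∧ tip (vecMulVec (v i) (v i)) X = 1) :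
    ∀ i : Fin n, u i ⬝ᵥ x = 1 ∧ v i ⬝ᵥ x = 1 := by
  -- sum of x equals n
  have hsumx : ∑ e, x e = (n : ℝ) := by
    rw [← htrace]
    exact (Finset.sum_congr rfl fun e _ => congrFun hdiag.symm e)
  -- each u i ⬝ᵥ x ≤ 1
  have hule : ∀ i, u i ⬝ᵥ x ≤ 1 := fun i =>
    sq_le_one_of_psd x X hpsd (u i) (by rw [← tip_vecMulVec]; exact (hTypeI i).1)
  have hvle : ∀ i, v i ⬝ᵥ x ≤ 1 := fun i =>
    sq_le_one_of_psd x X hpsd (v i) (by rw [← tip_vecMulVec]; exact (hTypeI i).2)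
  -- sums of dot products equal n
  have husum : ∑ i, u i ⬝ᵥ x = (n : ℝ) := by
    rw [← hsumx]
    simp only [dotProduct]
    rw [Finset.sum_comm]
    refine Finset.sum_congr rfl fun e _ => ?_
    have : ∀ i, u i e * x e = (if src e = i then x e else 0) := by
      intro i; rw [hu]; by_cases h : src e = i <;> simp [h]
    simp [this]
  have hvsum : ∑ i, v i ⬝ᵥ x = (n : ℝ) := by
    rw [← hsumx]
    simp only [dotProduct]
    rw [Finset.sum_comm]
    refine Finset.sum_congr rfl fun e _ => ?_
    have : ∀ i, v i e * x e = (if tgt e = i then x e else 0) := by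
      intro i; rw [hv]; by_cases h : tgt e = i <;> simp [h]
    simp [this]
  have hueq : ∀ i ∈ Finset.univ, u i ⬝ᵥ x = (1 : ℝ) := by
    rw [← Finset.sum_eq_sum_iff_of_le fun i _ => hule i]
    rw [husum, Finset.sum_const, Finset.card_univ, Fintype.card_fin]
    simp
  have hveq : ∀ i ∈ Finset.univ, v i ⬝ᵥ x = (1 : ℝ) := by
    rw [← Finset.sum_eq_sum_iff_of_le fun i _ => hvle i]
    rw [hvsum, Finset.sum_const, Finset.card_univ, Fintype.card_fin]
    simp
  exact fun i => ⟨hueq i (Finset.mem_univ i), hveq i (Finset.mem_univ i)⟩
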